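/- Let E be a finite-dimensional real normed vector space and let R = (R¹,R²) : E × E → E × E be a continuously differentiable (C¹) discretization map on E. Then for every q ∈ E the total Fréchet derivative DR(q,0) : E × E → E × E is a linear isomorphism, and consequently R is a local diffeomorphism at every point (q,0) of the zero section: there exist open neighborhoods U of (q,0) and V of (q,q) such that R restricts to a homeomorphism from U onto V whose inverse is differentiable. -/

import Mathlib

/-- A `C¹` discretization map `R = (R¹,R²)` on a finite-dimensional real normed
vector space `E` has invertible total Fréchet derivative `DR(q,0)` at every
point of the zero section, and is therefore a local diffeomorphism at every
`(q,0)`: it restricts to a homeomorphism from a neighborhood `U` of `(q,0)`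
onto a neighborhood `V` of `(q,q)` whose inverse is differentiable. -/
theorem discretization_is_local_diffeo {E : Type*} [NormedAddCommGroup E]
    [NormedSpace ℝ E] [FiniteDimensional ℝ E]
    (R : E × E → E × E) (hC1 : ContDiff ℝ 1 R)
    (hdisc0 : ∀ q : E, R (q, 0) = (q, q))
    (hdisc1 : ∀ q : E, HasFDerivAt
      (fun v : E => (R (q, v)).2 - (R (q, v)).1)
      (ContinuousLinearMap.id ℝ E) 0) :
    ∀ q : E,
      (∃ L : (E × E) ≃L[ℝ] (E × E),
        (L : (E × E) →L[ℝ] (E × E)) = fderiv ℝ R (q, 0)) ∧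
      ∃ U V : Set (E × E), IsOpen U ∧ IsOpen V ∧ (q, 0) ∈ U ∧ (q, q) ∈ V ∧
        Set.BijOn R U V ∧ ContinuousOn R U ∧
        ∃ g : E × E → E × E, Set.InvOn g R U V ∧ ContinuousOn g V ∧
          ∀ y ∈ V, DifferentiableAt ℝ g y := by
  intro q
  have hdiff : Differentiable ℝ R := hC1.differentiable one_ne_zero
  set D : (E × E) →L[ℝ] (E × E) := fderiv ℝ R (q, 0) with hDdef
  have hD : HasFDerivAt R D (q, 0) := (hdiff (q, 0)).hasFDerivAt
  -- Fact A : D (a, 0) = (a, a)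
  have hA : ∀ a : E, D (a, 0) = (a, a) := by
    intro a
    have h1 : HasFDerivAt (fun p : E => R (p, 0))
        (D.comp (ContinuousLinearMap.inl ℝ E E)) q :=
      hD.comp q (ContinuousLinearMap.inl ℝ E E).hasFDerivAt
    have h2 : HasFDerivAt (fun p : E => R (p, 0))
        ((ContinuousLinearMap.id ℝ E).prod (ContinuousLinearMap.id ℝ E)) q := by
      have : HasFDerivAt (fun p : E => ((p, p) : E × E))
          ((ContinuousLinearMap.id ℝ E).prod (ContinuousLinearMap.id ℝ E)) q :=
        HasFDerivAt.prodMk (hasFDerivAt_id q) (hasFDerivAt_id q)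
      exact this.congr_of_eventuallyEq (Filter.Eventually.of_forall fun p => hdisc0 p)
    have := h1.unique h2
    have := congrArg (fun (T : E →L[ℝ] E × E) => T a) this
    simpa using this
  -- Fact B : (D (0,b)).2 - (D (0,b)).1 = b
  have hB : ∀ b : E, (D (0, b)).2 - (D (0, b)).1 = b := by
    intro b
    set C : E →L[ℝ] E × E := (0 : E →L[ℝ] E).prod (ContinuousLinearMap.id ℝ E) with hCdef
    have hψ : HasFDerivAt (fun v : E => ((q, v) : E × E)) C 0 :=
      HasFDerivAt.prodMk (hasFDerivAt_const q (0 : E)) (hasFDerivAt_id (0 : E))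
    have hcomp : HasFDerivAt (fun v : E => R (q, v)) (D.comp C) 0 := hD.comp 0 hψ
    set S : (E × E) →L[ℝ] E :=
      ContinuousLinearMap.snd ℝ E E - ContinuousLinearMap.fst ℝ E E with hSdef
    have h1 : HasFDerivAt (fun v : E => (R (q, v)).2 - (R (q, v)).1)
        (S.comp (D.comp C)) 0 := by
      have := (S.hasFDerivAt (x := R (q, 0))).comp 0 hcomp
      exact this.congr_of_eventuallyEq (Filter.Eventually.of_forall fun v => by
        simp [hSdef])
    have := h1.unique (hdisc1 q)
    have := congrArg (fun (T : E →L[ℝ] E) => T b) this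
    simpa [hSdef, hCdef] using this
  -- D is injective
  have hinj : Function.Injective D := by
    have hker : ∀ p : E × E, D p = 0 → p = 0 := by
      rintro ⟨a, b⟩ hp
      have hsplit : ((a, b) : E × E) = (a, 0) + (0, b) := by simp
      rw [hsplit, map_add, hA a] at hp
      have h1 : a + (D (0, b)).1 = 0 := congrArg Prod.fst hp
      have h2 : a + (D (0, b)).2 = 0 := congrArg Prod.snd hp
      have hb : b = 0 := by
        calc b = (D (0, b)).2 - (D (0, b)).1 := (hB b).symm
          _ = (a + (D (0, b)).2) - (a + (D (0, b)).1) := by abel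
          _ = 0 - 0 := by rw [h1, h2]
          _ = 0 := sub_zero 0
      subst hb
      have : ((a, a) : E × E) = 0 := by simpa [show D (0, 0) = 0 from map_zero D] using hp
      have ha : a = 0 := congrArg Prod.fst this
      simp [ha]
    intro x y hxy
    have : D (x - y) = 0 := by rw [map_sub, hxy, sub_self]
    have := hker _ this
    exact sub_eq_zero.mp this
  have hsurj : Function.Surjective D :=
    (LinearMap.injective_iff_surjective (f := (D : (E × E) →ₗ[ℝ] (E × E)))).mp hinj
  -- the continuous linear equiv
  let Llin : (E × E) ≃ₗ[ℝ] (E × E) :=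
    LinearEquiv.ofBijective (D : (E × E) →ₗ[ℝ] (E × E)) ⟨hinj, hsurj⟩
  let L : (E × E) ≃L[ℝ] (E × E) := Llin.toContinuousLinearEquiv
  have hL : (L : (E × E) →L[ℝ] (E × E)) = D := ContinuousLinearMap.ext fun x => rfl
  refine ⟨⟨L, hL⟩, ?_⟩
  -- inverse function theorem setup
  have hstrict0 : HasStrictFDerivAt R ((L : (E × E) →L[ℝ] (E × E))) (q, 0) := by
    rw [hL]; exact hC1.hasStrictFDerivAt one_ne_zero
  set F := HasStrictFDerivAt.toOpenPartialHomeomorph R hstrict0 with hFdef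
  have hFcoe : (F : E × E → E × E) = R := HasStrictFDerivAt.toOpenPartialHomeomorph_coe hstrict0
  set W : Set (E × E) := {x | IsUnit (fderiv ℝ R x)} with hWdef
  have hWopen : IsOpen W := by
    have hcont : Continuous (fderiv ℝ R) := hC1.continuous_fderiv one_ne_zero
    exact Units.isOpen.preimage hcont
  have hq0W : (q, 0) ∈ W := by
    rw [hWdef, Set.mem_setOf_eq, ← hDdef, ← hL]
    exact L.toUnit.isUnit
  set U : Set (E × E) := F.source ∩ W with hUdef
  have hUopen : IsOpen U := F.open_source.inter hWopen
  have hq0U : (q, 0) ∈ U := ⟨HasStrictFDerivAt.mem_toOpenPartialHomeomorph_source hstrict0, hq0W⟩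
  have hUsub : U ⊆ F.source := Set.inter_subset_left
  set V : Set (E × E) := F '' U with hVdef
  have hVR : V = R '' U := by rw [hVdef, hFcoe]
  have hVopen : IsOpen V := F.isOpen_image_of_subset_source hUopen hUsub
  have hqqV : (q, q) ∈ V := by
    rw [hVR]
    exact ⟨(q, 0), hq0U, hdisc0 q⟩
  have hVtarget : V ⊆ F.target := by
    rw [hVdef, ← F.image_source_eq_target]
    exact Set.image_mono hUsub
  have hleft : ∀ x ∈ U, F.symm (R x) = x := by
    intro x hx
    have := F.left_inv (hUsub hx)
    rwa [hFcoe] at this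
  refine ⟨U, V, hUopen, hVopen, hq0U, hqqV, ?_, hC1.continuous.continuousOn, F.symm, ?_, ?_, ?_⟩
  · -- BijOn
    refine ⟨fun x hx => by rw [hVR]; exact Set.mem_image_of_mem R hx, ?_, ?_⟩
    · intro x hx y hy hxy
      have hinjF := F.injOn
      rw [hFcoe] at hinjF
      exact hinjF (hUsub hx) (hUsub hy) hxy
    · intro y hy
      rw [hVR] at hy
      exact hy
  · -- InvOn
    constructor
    · intro x hx; exact hleft x hx
    · rintro y hy
      rw [hVR] at hy
      obtain ⟨x, hx, rfl⟩ := hy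
      rw [hleft x hx]
  · -- continuity of inverse
    exact F.continuousOn_symm.mono hVtarget
  · -- differentiability of inverse
    intro y hy
    rw [hVR] at hy
    obtain ⟨x, hx, rfl⟩ := hy
    have hxW : IsUnit (fderiv ℝ R x) := hx.2
    let Lx : (E × E) ≃L[ℝ] (E × E) := ContinuousLinearEquiv.unitsEquiv ℝ (E × E) hxW.unit
    have hLx : (Lx : (E × E) →L[ℝ] (E × E)) = fderiv ℝ R x :=
      ContinuousLinearMap.ext fun v => by
        rw [show (Lx : (E × E) →L[ℝ] (E × E)) v = (hxW.unit : (E × E) →L[ℝ] (E × E)) v from rfl,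
          hxW.unit_spec]
    have hstrictx : HasStrictFDerivAt R ((Lx : (E × E) →L[ℝ] (E × E))) x := by
      rw [hLx]; exact hC1.hasStrictFDerivAt one_ne_zero
    have hg : ∀ᶠ x' in nhds x, F.symm (R x') = x' := by
      have := F.eventually_left_inverse (hUsub hx)
      filter_upwards [this] with x' hx'
      rwa [hFcoe] at hx'
    exact HasStrictFDerivAt.differentiableAt (HasStrictFDerivAt.to_local_left_inverse hstrictx hg)
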